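/- If G is a digraph on a vertex set V of size n ≥ 2 that is the disjoint union of n−1 spanning arborescences A_1, ..., A_{n−1} all rooted at the same vertex r, then G contains a rainbow spanning arborescence (a spanning arborescence using exactly one arc from each A_i), and it is rooted at r. -/

import Mathlib

open Finset

variable {V : Type*}

/-- `A` is the arc set of an arborescence on vertex set `U` rooted at `r`:
all arcs lie within `U`, the root has no incoming arc, every other vertex of `U`
has exactly one incoming arc, and every vertex of `U` is reachable from `r`. -/
def IsArborOn [DecidableEq V] (U : Finset V) (A : Finset (V × V)) (r : V) : Prop :=
  r ∈ U ∧ (∀ e ∈ A, e.1 ∈ U ∧ e.2 ∈ U) ∧ (∀ e ∈ A, e.2 ≠ r) ∧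
  (∀ v ∈ U, v ≠ r → (A.filter (fun e => e.2 = v)).card = 1) ∧
  (∀ v ∈ U, Relation.ReflTransGen (fun a b => (a, b) ∈ A) r v)

/-- A spanning arborescence on the whole (finite) vertex type. -/
def IsSpanningArbor [Fintype V] [DecidableEq V] (A : Finset (V × V)) (r : V) : Prop :=
  IsArborOn Finset.univ A r

/-- `B` is rainbow w.r.t. the colored arc sets `A 0, …, A (k-1)`:
each arc of `B` can be assigned a color whose class contains it, with all
assigned colors distinct (i.e. at most one arc from each color). -/
def IsRainbowOf {k : ℕ} (A : Fin k → Finset (V × V)) (B : Finset (V × V)) : Prop :=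
  ∃ c : V × V → Fin k, Set.InjOn c ↑B ∧ ∀ e ∈ B, e ∈ A (c e)

/-- Along a reflexive-transitive chain from inside `S` to outside `S`,
some single step crosses the boundary. -/
lemma cross_lemma {R : V → V → Prop} {S : Set V} {r v : V}
    (h : Relation.ReflTransGen R r v) (hr : r ∈ S) (hv : v ∉ S) :
    ∃ a ∈ S, ∃ b, b ∉ S ∧ R a b := by
  revert hv
  induction h with
  | refl => exact fun hv => absurd hr hv
  | @tail b c hrb hbc ih =>
    intro hc
    by_cases hb : b ∈ S
    · exact ⟨b, hb, c, hc, hbc⟩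
    · exact ih hb

/-- Greedy extension: given a reached set `S` containing `r` and a set `C` of
unused colors with `|C| = |V ∖ S|`, there is a rainbow forest covering `V ∖ S`
hanging from `S`, using colors from `C`. -/
lemma key_lemma [Fintype V] [DecidableEq V] {k : ℕ} (hk : 0 < k)
    (A : Fin k → Finset (V × V)) (r : V) (hA : ∀ i, IsSpanningArbor (A i) r) :
    ∀ (m : ℕ) (S : Finset V) (C : Finset (Fin k)), r ∈ S →
      (Finset.univ \ S).card = m → C.card = m →
      ∃ (B : Finset (V × V)) (c : V × V → Fin k),
        (∀ e ∈ B, e.2 ∉ S) ∧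
        (∀ v ∉ S, (B.filter (fun e => e.2 = v)).card = 1) ∧
        (∀ v ∉ S, ∃ u ∈ S, Relation.ReflTransGen (fun a b => (a, b) ∈ B) u v) ∧
        Set.InjOn c ↑B ∧ (∀ e ∈ B, e ∈ A (c e)) ∧ (∀ e ∈ B, c e ∈ C) := by
  intro m
  induction m with
  | zero =>
    intro S C hrS hScard hCcard
    have hSuniv : ∀ v : V, v ∈ S := by
      intro v
      by_contra hv
      have : v ∈ Finset.univ \ S := by simp [hv]
      rw [Finset.card_eq_zero.mp hScard] at this
      exact absurd this (Finset.notMem_empty v)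
    refine ⟨∅, fun _ => ⟨0, hk⟩, ?_, ?_, ?_, ?_, ?_, ?_⟩ <;>
      simp_all [Set.InjOn]
  | succ m ih =>
    intro S C hrS hScard hCcard
    -- pick a color
    have hCne : C.Nonempty := Finset.card_pos.mp (by omega)
    obtain ⟨i, hi⟩ := hCne
    -- pick a vertex outside S
    have hVne : (Finset.univ \ S).Nonempty := Finset.card_pos.mp (by omega)
    obtain ⟨v0, hv0⟩ := hVne
    have hv0S : v0 ∉ S := (Finset.mem_sdiff.mp hv0).2
    -- find a crossing arc in color i
    obtain ⟨_, _, _, _, hreach⟩ := hA i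
    obtain ⟨a, ha, b, hb, hab⟩ :=
      cross_lemma (S := (↑S : Set V)) (hreach v0 (Finset.mem_univ _)) hrS hv0S
    have hbS : b ∉ S := hb
    -- apply induction hypothesis to S' = insert b S, C' = C.erase i
    have hS'card : (Finset.univ \ insert b S).card = m := by
      rw [Finset.sdiff_insert]
      rw [Finset.card_erase_of_mem (by simp [hbS])]
      omega
    have hC'card : (C.erase i).card = m := by
      rw [Finset.card_erase_of_mem hi]; omega
    obtain ⟨B', c', h1, h2, h3, h4, h5, h6⟩ :=
      ih (insert b S) (C.erase i) (Finset.mem_insert_of_mem hrS) hS'card hC'card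
    have heB' : (a, b) ∉ B' := fun h => (h1 _ h) (Finset.mem_insert_self _ _)
    refine ⟨insert (a, b) B', fun x => if x = (a, b) then i else c' x,
      ?_, ?_, ?_, ?_, ?_, ?_⟩
    · intro f hf
      rcases Finset.mem_insert.mp hf with rfl | hf
      · exact hbS
      · exact fun hfS => (h1 f hf) (Finset.mem_insert_of_mem hfS)
    · intro v hv
      by_cases hvb : v = b
      · subst hvb
        rw [Finset.filter_insert, if_pos rfl]
        have hfe : B'.filter (fun e => e.2 = v) = ∅ := by
          rw [Finset.filter_eq_empty_iff]
          intro f hf hfv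
          exact (h1 f hf) (by simp [hfv])
        rw [hfe, Finset.card_insert_of_notMem (Finset.notMem_empty _)]
        rfl
      · rw [Finset.filter_insert, if_neg (by simpa using Ne.symm hvb)]
        exact h2 v (by simp [hv, hvb])
    · intro v hv
      have hmono : ∀ x y : V,
          Relation.ReflTransGen (fun p q => (p, q) ∈ B') x y →
          Relation.ReflTransGen (fun p q => (p, q) ∈ insert (a, b) B') x y := by
        intro x y h
        exact Relation.ReflTransGen.mono (fun p q hpq => Finset.mem_insert_of_mem hpq) x y h
      by_cases hvb : v = b
      · subst hvb
        exact ⟨a, ha, Relation.ReflTransGen.single (Finset.mem_insert_self _ _)⟩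
      · obtain ⟨u, hu, hchain⟩ := h3 v (by simp [hv, hvb])
        rcases Finset.mem_insert.mp hu with rfl | huS
        · exact ⟨a, ha, Relation.ReflTransGen.head
            (Finset.mem_insert_self _ _) (hmono _ _ hchain)⟩
        · exact ⟨u, huS, hmono _ _ hchain⟩
    · intro x hx y hy hxy
      simp only [Finset.coe_insert, Set.mem_insert_iff, Finset.mem_coe] at hx hy
      rcases hx with rfl | hx <;> rcases hy with rfl | hy
      · rfl
      · exfalso
        have hyne : y ≠ (a, b) := fun h => heB' (h ▸ hy)
        dsimp only at hxy
        rw [if_pos rfl, if_neg hyne] at hxy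
        exact (Finset.mem_erase.mp (h6 y hy)).1 hxy.symm
      · exfalso
        have hxne : x ≠ (a, b) := fun h => heB' (h ▸ hx)
        dsimp only at hxy
        rw [if_pos rfl, if_neg hxne] at hxy
        exact (Finset.mem_erase.mp (h6 x hx)).1 hxy
      · have hxne : x ≠ (a, b) := fun h => heB' (h ▸ hx)
        have hyne : y ≠ (a, b) := fun h => heB' (h ▸ hy)
        dsimp only at hxy
        rw [if_neg hxne, if_neg hyne] at hxy
        exact h4 (Finset.mem_coe.mpr hx) (Finset.mem_coe.mpr hy) hxy
    · intro f hf
      rcases Finset.mem_insert.mp hf with rfl | hf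
      · simpa using hab
      · have hfne : f ≠ (a, b) := fun h => heB' (h ▸ hf)
        simpa [hfne] using h5 f hf
    · intro f hf
      rcases Finset.mem_insert.mp hf with rfl | hf
      · simpa using hi
      · have hfne : f ≠ (a, b) := fun h => heB' (h ▸ hf)
        show (if f = (a, b) then i else c' f) ∈ C
        rw [if_neg hfne]
        exact Finset.mem_of_mem_erase (h6 f hf)

theorem stmt0 [Fintype V] [DecidableEq V] (hn : 2 ≤ Fintype.card V)
    (A : Fin (Fintype.card V - 1) → Finset (V × V)) (r : V)
    (hA : ∀ i, IsSpanningArbor (A i) r) :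
    ∃ B : Finset (V × V), IsSpanningArbor B r ∧ IsRainbowOf A B := by
  have hk : 0 < Fintype.card V - 1 := by omega
  have hm1 : (Finset.univ \ ({r} : Finset V)).card = Fintype.card V - 1 := by
    rw [Finset.card_sdiff]
    simp
  have hm2 : (Finset.univ : Finset (Fin (Fintype.card V - 1))).card =
      Fintype.card V - 1 := by simp
  obtain ⟨B, c, h1, h2, h3, h4, h5, _⟩ :=
    key_lemma hk A r hA (Fintype.card V - 1) {r} Finset.univ
      (Finset.mem_singleton_self r) hm1 hm2
  refine ⟨B, ⟨Finset.mem_univ r, fun e _ => ⟨Finset.mem_univ _, Finset.mem_univ _⟩,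
    ?_, ?_, ?_⟩, c, h4, h5⟩
  · intro e he
    have := h1 e he
    simpa using this
  · intro v _ hvr
    exact h2 v (by simpa using hvr)
  · intro v _
    by_cases hvr : v = r
    · subst hvr; exact Relation.ReflTransGen.refl
    · obtain ⟨u, hu, hchain⟩ := h3 v (by simpa using hvr)
      rw [Finset.mem_singleton] at hu
      subst hu
      exact hchain
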